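/- Let H be a complex Hilbert space with dim H ≥ 2. Then every orthogonal projection p of H onto a one-dimensional subspace is an engaged extreme vector of the cone of positive bounded operators: there exist finitely many orthogonal projections q₁, …, q_n onto one-dimensional subspaces, each distinct from p, and real numbers λ₁, …, λ_n such that p = λ₁q₁ + ⋯ + λ_nq_n. -/

import Mathlib

open scoped InnerProductSpace

noncomputable def rk1 {H : Type*} [NormedAddCommGroup H] [InnerProductSpace ℂ H]
    (u : H) : H →L[ℂ] H := (innerSL ℂ u).smulRight u

section aux
variable {H : Type*} [NormedAddCommGroup H] [InnerProductSpace ℂ H]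

lemma rk1_apply (u x : H) : rk1 u x = ⟪u, x⟫_ℂ • u := rfl

lemma rk1_idem (u : H) (hu : ‖u‖ = 1) : rk1 u * rk1 u = rk1 u := by
  ext x
  simp only [ContinuousLinearMap.mul_apply, rk1_apply, inner_smul_right, smul_smul]
  have : ⟪u, u⟫_ℂ = 1 := by
    rw [inner_self_eq_norm_sq_to_K, hu]; norm_num
  rw [this, mul_one]

lemma rk1_sa [CompleteSpace H] (u : H) : IsSelfAdjoint (rk1 u) := by
  rw [ContinuousLinearMap.isSelfAdjoint_iff_isSymmetric]
  intro x y
  simp [rk1_apply, inner_smul_left, inner_smul_right, mul_comm]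

lemma rk1_range (u : H) (hu : ‖u‖ = 1) : LinearMap.range (rk1 u : H →ₗ[ℂ] H) = ℂ ∙ u := by
  apply le_antisymm
  · rintro _ ⟨x, rfl⟩
    exact Submodule.smul_mem _ _ (Submodule.mem_span_singleton_self u)
  · rw [Submodule.span_singleton_le_iff_mem]
    refine ⟨u, ?_⟩
    have : ⟪u, u⟫_ℂ = 1 := by rw [inner_self_eq_norm_sq_to_K, hu]; norm_num
    simp [rk1_apply, this, hu]

lemma rk1_finrank (u : H) (hu : ‖u‖ = 1) :
    Module.finrank ℂ (LinearMap.range (rk1 u : H →ₗ[ℂ] H)) = 1 := by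
  rw [rk1_range u hu]
  exact finrank_span_singleton (by intro h; rw [h] at hu; simp at hu)

end aux

/-- If `dim H ≥ 2`, every rank-one orthogonal projection `p` on `H` is an
engaged extreme vector of the cone of positive operators: `p` is a real linear combination
of rank-one orthogonal projections, each distinct from `p`. -/
theorem rank_one_projection_is_engaged
    {H : Type*} [NormedAddCommGroup H] [InnerProductSpace ℂ H] [CompleteSpace H]
    (hdim : 2 ≤ Module.rank ℂ H)
    (p : H →L[ℂ] H) (hp_idem : p * p = p) (hp_sa : IsSelfAdjoint p)
    (hp_rank : Module.finrank ℂ (LinearMap.range (p : H →ₗ[ℂ] H)) = 1) :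
    ∃ (n : ℕ) (q : Fin n → (H →L[ℂ] H)) (c : Fin n → ℝ),
      (∀ i, q i * q i = q i ∧ IsSelfAdjoint (q i) ∧
        Module.finrank ℂ (LinearMap.range (q i : H →ₗ[ℂ] H)) = 1 ∧ q i ≠ p) ∧
      p = ∑ i, c i • q i := by
  -- a unit vector e in the range of p
  obtain ⟨x0, hx0mem, hx0ne⟩ : ∃ x : H, x ∈ LinearMap.range (p : H →ₗ[ℂ] H) ∧ x ≠ 0 := by
    have hne : LinearMap.range (p : H →ₗ[ℂ] H) ≠ ⊥ := by
      intro h; rw [h] at hp_rank; simp at hp_rank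
    exact (Submodule.ne_bot_iff _).mp hne
  set e : H := (‖x0‖⁻¹ : ℂ) • x0 with he_def
  have he : ‖e‖ = 1 := by
    rw [he_def, norm_smul]
    simp [norm_inv, inv_mul_cancel₀ (norm_ne_zero_iff.mpr hx0ne)]
  have hene : e ≠ 0 := by intro h; rw [h] at he; simp at he
  have hpx0 : p x0 = x0 := by
    obtain ⟨y, hy⟩ := hx0mem
    rw [← hy]; show p (p y) = p y; rw [← ContinuousLinearMap.mul_apply, hp_idem]
  have hpe : p e = e := by rw [he_def, map_smul, hpx0]
  clear_value e
  -- p = rk1 e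
  have hfd : FiniteDimensional ℂ (LinearMap.range (p : H →ₗ[ℂ] H)) :=
    Module.finite_of_finrank_eq_succ hp_rank
  have hspan : (ℂ ∙ e) = LinearMap.range (p : H →ₗ[ℂ] H) := by
    apply Submodule.eq_of_le_of_finrank_eq
    · rw [Submodule.span_singleton_le_iff_mem]; exact ⟨e, hpe⟩
    · rw [hp_rank]; exact finrank_span_singleton hene
  have hee : ⟪e, e⟫_ℂ = 1 := by rw [inner_self_eq_norm_sq_to_K, he]; norm_num
  have hsym := hp_sa.isSymmetric
  have hp_eq : p = rk1 e := by
    ext y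
    have hmem : p y ∈ (ℂ ∙ e) := hspan ▸ LinearMap.mem_range_self _ y
    obtain ⟨c, hc⟩ := Submodule.mem_span_singleton.mp hmem
    have hc' : ⟪e, p y⟫_ℂ = c := by
      rw [← hc, inner_smul_right, hee, mul_one]
    have hc'' : ⟪e, p y⟫_ℂ = ⟪e, y⟫_ℂ := by
      rw [show ⟪e, p y⟫_ℂ = ⟪p e, y⟫_ℂ from (hsym e y).symm, hpe]
    rw [rk1_apply, ← hc, ← hc', hc'']
  -- a unit vector f orthogonal to e
  have hbot : (ℂ ∙ e)ᗮ ≠ ⊥ := by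
    intro h
    have htop : (ℂ ∙ e) = ⊤ := Submodule.orthogonal_eq_bot_iff.mp h
    have h1 : Module.rank ℂ ↥(ℂ ∙ e) ≤ 1 := by
      simpa using rank_span_le (R := ℂ) ({e} : Set H)
    rw [htop, rank_top] at h1
    exact absurd (hdim.trans h1) (by norm_num)
  obtain ⟨f0, hf0mem, hf0ne⟩ := (Submodule.ne_bot_iff _).mp hbot
  set f : H := (‖f0‖⁻¹ : ℂ) • f0 with hf_def
  have hf : ‖f‖ = 1 := by
    rw [hf_def, norm_smul]
    simp [norm_inv, inv_mul_cancel₀ (norm_ne_zero_iff.mpr hf0ne)]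
  have hef : ⟪e, f⟫_ℂ = 0 := by
    have h0 : ⟪e, f0⟫_ℂ = 0 :=
      (Submodule.mem_orthogonal _ _).mp hf0mem e (Submodule.mem_span_singleton_self e)
    rw [hf_def, inner_smul_right, h0, mul_zero]
  have hfe : ⟪f, e⟫_ℂ = 0 := by
    rw [← inner_conj_symm, hef, map_zero]
  have hff : ⟪f, f⟫_ℂ = 1 := by rw [inner_self_eq_norm_sq_to_K, hf]; norm_num
  clear_value f
  -- the vectors u, v
  set a : ℝ := (Real.sqrt 2)⁻¹ with ha_def
  have ha_pos : 0 < a := by positivity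
  have ha2 : (a : ℂ) * a * 2 = 1 := by
    have h : a * a * 2 = 1 := by
      rw [ha_def, ← mul_inv, Real.mul_self_sqrt (by norm_num)]
      norm_num
    exact_mod_cast congrArg Complex.ofReal h
  have hnepf : ‖e + f‖ = Real.sqrt 2 := by
    have h : ‖e + f‖ ^ 2 = 2 := by
      rw [@norm_add_sq ℂ, hef, he, hf]; simp; norm_num
    rw [← h, Real.sqrt_sq (norm_nonneg _)]
  have hnemf : ‖e - f‖ = Real.sqrt 2 := by
    have h : ‖e - f‖ ^ 2 = 2 := by
      rw [@norm_sub_sq ℂ, hef, he, hf]; simp; norm_num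
    rw [← h, Real.sqrt_sq (norm_nonneg _)]
  set u : H := (a : ℂ) • (e + f) with hu_def
  set v : H := (a : ℂ) • (e - f) with hv_def
  have hu : ‖u‖ = 1 := by
    rw [hu_def, norm_smul, hnepf]
    simp only [Complex.norm_real, Real.norm_eq_abs, abs_of_pos ha_pos, ha_def]
    rw [abs_of_pos (a := (√2 : ℝ)⁻¹) (by positivity)]
    exact inv_mul_cancel₀ (by positivity)
  have hv : ‖v‖ = 1 := by
    rw [hv_def, norm_smul, hnemf]
    simp only [Complex.norm_real, Real.norm_eq_abs, abs_of_pos ha_pos, ha_def]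
    rw [abs_of_pos (a := (√2 : ℝ)⁻¹) (by positivity)]
    exact inv_mul_cancel₀ (by positivity)
  have hepf : e + f ≠ 0 := by
    intro h; rw [h] at hnepf; simp at hnepf
    exact absurd hnepf.symm (by positivity)
  have hemf : e - f ≠ 0 := by
    intro h; rw [h] at hnemf; simp at hnemf
    exact absurd hnemf.symm (by positivity)
  have haC : (a : ℂ) ≠ 0 := by exact_mod_cast ha_pos.ne'
  -- distinctness
  have hfp : rk1 f ≠ p := by
    intro h
    have := congrArg (· e) h
    simp only [hp_eq, rk1_apply, hfe, zero_smul, hee] at this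
    exact hene (by simpa [hee] using this.symm)
  have hup : rk1 u ≠ p := by
    intro h
    have h2 : (⟪u, f⟫_ℂ) • u = (0 : H) := by
      have h3 := congrArg (· f) h
      simpa [hp_eq, rk1_apply, hef] using h3
    have hin : ⟪u, f⟫_ℂ = (a : ℂ) := by
      rw [hu_def, inner_smul_left, inner_add_left, hef, hff, Complex.conj_ofReal]; ring
    rw [hin, hu_def, smul_smul] at h2
    rcases smul_eq_zero.mp h2 with h3 | h3
    · exact mul_ne_zero haC haC h3
    · exact hepf h3
  have hvp : rk1 v ≠ p := by
    intro h
    have h2 : (⟪v, f⟫_ℂ) • v = (0 : H) := by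
      have h3 := congrArg (· f) h
      simpa [hp_eq, rk1_apply, hef] using h3
    have hin : ⟪v, f⟫_ℂ = -(a : ℂ) := by
      rw [hv_def, inner_smul_left, inner_sub_left, hef, hff, Complex.conj_ofReal]; ring
    rw [hin, hv_def, smul_smul] at h2
    rcases smul_eq_zero.mp h2 with h3 | h3
    · exact mul_ne_zero (neg_ne_zero.mpr haC) haC h3
    · exact hemf h3
  -- the decomposition
  refine ⟨3, ![rk1 u, rk1 v, rk1 f], ![1, 1, -1], ?_, ?_⟩
  · intro i
    fin_cases i
    · exact ⟨rk1_idem u hu, rk1_sa u, rk1_finrank u hu, hup⟩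
    · exact ⟨rk1_idem v hv, rk1_sa v, rk1_finrank v hv, hvp⟩
    · exact ⟨rk1_idem f hf, rk1_sa f, rk1_finrank f hf, hfp⟩
  · have key : rk1 e = rk1 u + rk1 v - rk1 f := by
      ext x
      simp only [ContinuousLinearMap.sub_apply, ContinuousLinearMap.add_apply, rk1_apply,
        hu_def, hv_def, inner_smul_left, inner_add_left, inner_sub_left,
        Complex.conj_ofReal, smul_smul]
      match_scalars
      · linear_combination (-⟪e, x⟫_ℂ) * ha2
      · linear_combination (-⟪f, x⟫_ℂ) * ha2
    rw [hp_eq, key]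
    simp [Fin.sum_univ_three]
    abel
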